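/- Define ψ(r,ζ) = −(‖r‖³(rᵀζ)/4)·tanh(‖r‖³(rᵀζ)/ε₁) + √(‖r‖⁶Φ₁(r,ζ)² + ε₂) with ε₁, ε₂ > 0. Then for all r ∈ ℝ³\{0} and f* ∈ ℝ³, ψ(r, f*/‖r‖⁴) > ‖c₁(r,f*)‖², i.e., ψ strictly dominates the squared magnitude of the allocated amplitude. (Proof sketch: ψ(r, f*/‖r‖⁴) ≥ −|rᵀf*|/(4‖r‖) + Φ₁(r,f*)/‖r‖, which exceeds ‖c₁(r,f*)‖² in both cases rᵀf* ≠ 0 and rᵀf* = 0.) -/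

import Mathlib

open Matrix

noncomputable section

def norm3 (r : Fin 3 → ℝ) : ℝ := Real.sqrt (r ⬝ᵥ r)

def Phi1 (r f : Fin 3 → ℝ) : ℝ :=
  Real.sqrt (norm3 (crossProduct r f) ^ 2 + norm3 r ^ 2 * norm3 f ^ 2)

def Phi2 (r f : Fin 3 → ℝ) : ℝ := (2 - Real.sign (r ⬝ᵥ f) ^ 2) * Phi1 r f

def aX (r f : Fin 3 → ℝ) : ℝ :=
  -(Real.sign (r ⬝ᵥ f) / 2) * Real.sqrt ((|r ⬝ᵥ f| + Phi1 r f) / norm3 r)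

def aY (r f : Fin 3 → ℝ) : ℝ :=
  (1 / Real.sqrt 2) * Real.sqrt ((-|r ⬝ᵥ f| + Phi2 r f) / norm3 r)

def bX (r f : Fin 3 → ℝ) : ℝ :=
  (1 / 2) * Real.sqrt ((|r ⬝ᵥ f| + Phi2 r f) / norm3 r)

def bY (r f : Fin 3 → ℝ) : ℝ :=
  -(Real.sign (r ⬝ᵥ f) / Real.sqrt 2) * Real.sqrt ((-|r ⬝ᵥ f| + Phi1 r f) / norm3 r)

open Classical in
def Rmat (r f : Fin 3 → ℝ) : Matrix (Fin 3) (Fin 3) ℝ :=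
  if crossProduct r f ≠ 0 then
    Matrix.of ![ (1 / norm3 r) • r,
      (1 / (norm3 r * norm3 (crossProduct r f))) • ((r ⬝ᵥ r) • f - (r ⬝ᵥ f) • r),
      (1 / norm3 (crossProduct r f)) • (crossProduct r f) ]
  else
    Matrix.of ![ (1 / norm3 r) • r, 0, 0 ]

def c1 (r f : Fin 3 → ℝ) : Fin 3 → ℝ := (Rmat r f)ᵀ.mulVec ![aX r f, aY r f, 0]

def c2 (r f : Fin 3 → ℝ) : Fin 3 → ℝ := (Rmat r f)ᵀ.mulVec ![bX r f, bY r f, 0]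

def f3 (r u v : Fin 3 → ℝ) : Fin 3 → ℝ :=
  ((v ⬝ᵥ r) / norm3 r) • u + ((u ⬝ᵥ r) / norm3 r) • v + ((u ⬝ᵥ v) / norm3 r) • r
    - (5 * (u ⬝ᵥ r) * (v ⬝ᵥ r) / norm3 r ^ 3) • r

end

noncomputable def psi (ε₁ ε₂ : ℝ) (r ζ : Fin 3 → ℝ) : ℝ :=
  -(norm3 r ^ 3 * (r ⬝ᵥ ζ) / 4) * Real.tanh (norm3 r ^ 3 * (r ⬝ᵥ ζ) / ε₁) +
    Real.sqrt (norm3 r ^ 6 * Phi1 r ζ ^ 2 + ε₂)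

open Matrix

lemma dot_self_nonneg3 (v : Fin 3 → ℝ) : 0 ≤ v ⬝ᵥ v := by
  exact Finset.sum_nonneg fun i _ => mul_self_nonneg _

lemma dot_self_pos3 (v : Fin 3 → ℝ) (hv : v ≠ 0) : 0 < v ⬝ᵥ v := by
  rcases lt_or_eq_of_le (dot_self_nonneg3 v) with h | h
  · exact h
  · exact absurd ((dotProduct_self_eq_zero).mp h.symm) hv

lemma norm3_sq (v : Fin 3 → ℝ) : norm3 v ^ 2 = v ⬝ᵥ v := Real.sq_sqrt (dot_self_nonneg3 v)

lemma norm3_pos (v : Fin 3 → ℝ) (hv : v ≠ 0) : 0 < norm3 v :=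
  Real.sqrt_pos.2 (dot_self_pos3 v hv)

lemma norm3_smul (c : ℝ) (v : Fin 3 → ℝ) : norm3 (c • v) = |c| * norm3 v := by
  unfold norm3
  rw [smul_dotProduct, dotProduct_smul, smul_eq_mul, smul_eq_mul,
    show c * (c * (v ⬝ᵥ v)) = c^2 * (v ⬝ᵥ v) by ring,
    Real.sqrt_mul (sq_nonneg c), Real.sqrt_sq_eq_abs]

lemma lagrange (r f : Fin 3 → ℝ) :
    (crossProduct r f) ⬝ᵥ (crossProduct r f) = (r ⬝ᵥ r) * (f ⬝ᵥ f) - (r ⬝ᵥ f)^2 := by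
  simp [crossProduct, dotProduct, Fin.sum_univ_three]
  ring

lemma Phi1_nonneg (r f : Fin 3 → ℝ) : 0 ≤ Phi1 r f := Real.sqrt_nonneg _

lemma Phi1_ge (r f : Fin 3 → ℝ) : |r ⬝ᵥ f| ≤ Phi1 r f := by
  unfold Phi1
  rw [← Real.sqrt_sq_eq_abs]
  apply Real.sqrt_le_sqrt
  have h1 := dot_self_nonneg3 (crossProduct r f)
  have h2 := lagrange r f
  rw [norm3_sq, norm3_sq, norm3_sq]
  nlinarith

lemma Phi1_smul (r f : Fin 3 → ℝ) (c : ℝ) : Phi1 r (c • f) = |c| * Phi1 r f := by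
  unfold Phi1
  rw [LinearMap.map_smul, norm3_smul, norm3_smul,
    show (|c| * norm3 (crossProduct r f))^2 + norm3 r ^2 * (|c| * norm3 f)^2
      = c^2 * ((norm3 (crossProduct r f))^2 + norm3 r^2 * norm3 f^2) by
        rw [← sq_abs c]; ring,
    Real.sqrt_mul (sq_nonneg c), Real.sqrt_sq_eq_abs]

lemma abs_tanh_le_one (x : ℝ) : |Real.tanh x| ≤ 1 := by
  rw [Real.tanh_eq_sinh_div_cosh, abs_div, abs_of_pos (Real.cosh_pos x),
    div_le_one (Real.cosh_pos x)]
  nlinarith [Real.cosh_sq_sub_sinh_sq x, Real.cosh_pos x, abs_nonneg (Real.sinh x),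
    sq_abs (Real.sinh x)]

lemma quad (u₀ u₁ u₂ : Fin 3 → ℝ) (a b : ℝ) :
    ((Matrix.of ![u₀,u₁,u₂])ᵀ.mulVec ![a,b,0]) ⬝ᵥ ((Matrix.of ![u₀,u₁,u₂])ᵀ.mulVec ![a,b,0])
      = a^2*(u₀ ⬝ᵥ u₀) + 2*a*b*(u₀ ⬝ᵥ u₁) + b^2*(u₁ ⬝ᵥ u₁) := by
  simp [mulVec, dotProduct, Fin.sum_univ_three, Matrix.transpose]
  ring

theorem psi_dominates (ε₁ ε₂ : ℝ) (hε₁ : 0 < ε₁) (hε₂ : 0 < ε₂)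
    (r f : Fin 3 → ℝ) (hr : r ≠ 0) :
    psi ε₁ ε₂ r ((norm3 r ^ 4)⁻¹ • f) > norm3 (c1 r f) ^ 2 := by
  have hn : 0 < norm3 r := norm3_pos r hr
  have hP0 : 0 ≤ Phi1 r f := Phi1_nonneg r f
  have hPd : |r ⬝ᵥ f| ≤ Phi1 r f := Phi1_ge r f
  -- psi lower bound
  have key : -|r ⬝ᵥ f|/(4*norm3 r) + Phi1 r f / norm3 r < psi ε₁ ε₂ r ((norm3 r ^ 4)⁻¹ • f) := by
    unfold psi
    have hζd : r ⬝ᵥ ((norm3 r ^4)⁻¹ • f) = (norm3 r ^4)⁻¹ * (r ⬝ᵥ f) := by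
      rw [dotProduct_smul, smul_eq_mul]
    have hA : norm3 r ^3 * (r ⬝ᵥ ((norm3 r ^4)⁻¹ • f)) = (r ⬝ᵥ f) / norm3 r := by
      rw [hζd]; field_simp
    have hPz : Phi1 r ((norm3 r ^4)⁻¹ • f) = Phi1 r f / norm3 r ^4 := by
      rw [Phi1_smul, abs_of_pos (by positivity)]; ring
    rw [hA, hPz]
    have h1 : -|r ⬝ᵥ f|/(4*norm3 r) ≤ -((r ⬝ᵥ f)/norm3 r/4) * Real.tanh ((r ⬝ᵥ f)/norm3 r/ε₁) := by
      have ht := abs_tanh_le_one ((r ⬝ᵥ f)/norm3 r/ε₁)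
      have h2 : ((r ⬝ᵥ f)/norm3 r/4) * Real.tanh ((r ⬝ᵥ f)/norm3 r/ε₁) ≤ |(r ⬝ᵥ f)/norm3 r/4| := by
        calc ((r ⬝ᵥ f)/norm3 r/4) * Real.tanh ((r ⬝ᵥ f)/norm3 r/ε₁)
            ≤ |((r ⬝ᵥ f)/norm3 r/4) * Real.tanh ((r ⬝ᵥ f)/norm3 r/ε₁)| := le_abs_self _
          _ = |(r ⬝ᵥ f)/norm3 r/4| * |Real.tanh ((r ⬝ᵥ f)/norm3 r/ε₁)| := abs_mul _ _
          _ ≤ |(r ⬝ᵥ f)/norm3 r/4| * 1 :=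
              mul_le_mul_of_nonneg_left ht (abs_nonneg _)
          _ = |(r ⬝ᵥ f)/norm3 r/4| := mul_one _
      have habs : |(r ⬝ᵥ f)/norm3 r/4| = |r ⬝ᵥ f|/(4*norm3 r) := by
        rw [abs_div, abs_div, abs_of_pos hn]
        norm_num
        ring
      rw [habs] at h2
      calc -|r ⬝ᵥ f|/(4*norm3 r) = -(|r ⬝ᵥ f|/(4*norm3 r)) := by ring
        _ ≤ -((r ⬝ᵥ f)/norm3 r/4 * Real.tanh ((r ⬝ᵥ f)/norm3 r/ε₁)) := neg_le_neg h2
        _ = -((r ⬝ᵥ f)/norm3 r/4) * Real.tanh ((r ⬝ᵥ f)/norm3 r/ε₁) := by ring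
    have h2 : Phi1 r f / norm3 r <
        Real.sqrt (norm3 r ^6 * (Phi1 r f / norm3 r ^4)^2 + ε₂) := by
      have he : norm3 r ^6 * (Phi1 r f / norm3 r ^4)^2 = (Phi1 r f / norm3 r)^2 := by
        field_simp
      rw [he]
      calc Phi1 r f / norm3 r = Real.sqrt ((Phi1 r f / norm3 r)^2) :=
            (Real.sqrt_sq (by positivity)).symm
        _ < Real.sqrt ((Phi1 r f / norm3 r)^2 + ε₂) :=
            Real.sqrt_lt_sqrt (by positivity) (by linarith)
    exact add_lt_add_of_le_of_lt h1 h2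
  -- squared magnitudes of the coefficients
  have hc1 : norm3 (c1 r f) ^ 2 = c1 r f ⬝ᵥ c1 r f := norm3_sq _
  have haX : aX r f ^ 2 = Real.sign (r ⬝ᵥ f) ^2 / 4 * ((|r ⬝ᵥ f| + Phi1 r f)/norm3 r) := by
    unfold aX
    rw [mul_pow, Real.sq_sqrt (by positivity)]
    ring
  have hs1 : Real.sign (r ⬝ᵥ f) ^ 2 ≤ 1 := by
    rcases lt_trichotomy (r ⬝ᵥ f) 0 with h | h | h
    · rw [Real.sign_of_neg h]; norm_num
    · rw [h, Real.sign_zero]; norm_num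
    · rw [Real.sign_of_pos h]; norm_num
  have hPhi2 : Phi2 r f = (2 - Real.sign (r ⬝ᵥ f) ^ 2) * Phi1 r f := rfl
  have harg : (0:ℝ) ≤ (-|r ⬝ᵥ f| + Phi2 r f)/norm3 r := by
    apply div_nonneg _ hn.le
    rw [hPhi2]
    nlinarith [hPd, hP0, hs1, abs_nonneg (r ⬝ᵥ f)]
  have e2 : ((1:ℝ)/Real.sqrt 2)^2 = 1/2 := by
    rw [div_pow, one_pow, Real.sq_sqrt (by norm_num : (0:ℝ) ≤ 2)]
  have haY : aY r f ^ 2 = 1/2 * ((-|r ⬝ᵥ f| + Phi2 r f)/norm3 r) := by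
    unfold aY
    rw [mul_pow, e2, Real.sq_sqrt harg]
  have h00 : ((1/norm3 r) • r) ⬝ᵥ ((1/norm3 r) • r) = 1 := by
    rw [smul_dotProduct, dotProduct_smul, smul_eq_mul, smul_eq_mul, ← norm3_sq]
    field_simp
  rw [hc1]
  by_cases hx : crossProduct r f ≠ 0
  · -- cross nonzero case
    have hm : 0 < norm3 (crossProduct r f) := norm3_pos _ hx
    unfold c1 Rmat
    rw [if_pos hx, quad]
    have h01 : ((1/norm3 r) • r) ⬝ᵥ
        ((1/(norm3 r * norm3 (crossProduct r f))) • ((r ⬝ᵥ r) • f - (r ⬝ᵥ f) • r)) = 0 := by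
      rw [smul_dotProduct, dotProduct_smul, dotProduct_sub, dotProduct_smul, dotProduct_smul,
        smul_eq_mul, smul_eq_mul, smul_eq_mul, smul_eq_mul]
      ring
    have h11 : ((1/(norm3 r * norm3 (crossProduct r f))) • ((r ⬝ᵥ r) • f - (r ⬝ᵥ f) • r)) ⬝ᵥ
        ((1/(norm3 r * norm3 (crossProduct r f))) • ((r ⬝ᵥ r) • f - (r ⬝ᵥ f) • r)) = 1 := by
      have hw : ((r ⬝ᵥ r) • f - (r ⬝ᵥ f) • r) ⬝ᵥ ((r ⬝ᵥ r) • f - (r ⬝ᵥ f) • r)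
          = (r ⬝ᵥ r) * ((r ⬝ᵥ r) * (f ⬝ᵥ f) - (r ⬝ᵥ f)^2) := by
        simp only [sub_dotProduct, dotProduct_sub, smul_dotProduct, dotProduct_smul,
          smul_eq_mul, dotProduct_comm f r]
        ring
      rw [smul_dotProduct, dotProduct_smul, smul_eq_mul, smul_eq_mul, hw, ← lagrange,
        ← norm3_sq r, ← norm3_sq (crossProduct r f)]
      field_simp
    rw [h00, h01, h11]
    by_cases hd : r ⬝ᵥ f = 0
    · -- d = 0
      have hs : Real.sign (r ⬝ᵥ f) = 0 := by rw [hd, Real.sign_zero]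
      have haY2 : aY r f ^ 2 = Phi1 r f / norm3 r := by
        rw [haY, hPhi2, hs, hd, abs_zero]
        ring
      calc aX r f ^2 * 1 + 2 * aX r f * aY r f * 0 + aY r f ^2 * 1
          = aX r f ^2 + aY r f ^2 := by ring
        _ = Phi1 r f / norm3 r := by rw [haX, haY2, hs]; norm_num
        _ ≤ -|r ⬝ᵥ f|/(4*norm3 r) + Phi1 r f / norm3 r := by
            rw [hd, abs_zero]
            norm_num
        _ < _ := key
    · -- d ≠ 0
      have hs : Real.sign (r ⬝ᵥ f) ^ 2 = 1 := by
        rcases lt_trichotomy (r ⬝ᵥ f) 0 with h | h | h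
        · rw [Real.sign_of_neg h]; norm_num
        · exact absurd h hd
        · rw [Real.sign_of_pos h]; norm_num
      have hdpos : 0 < |r ⬝ᵥ f| := abs_pos.mpr hd
      have hPpos : 0 < Phi1 r f := lt_of_lt_of_le hdpos hPd
      have haY2 : aY r f ^ 2 = 1/2 * ((-|r ⬝ᵥ f| + Phi1 r f)/norm3 r) := by
        rw [haY, hPhi2, hs]
        ring_nf
      calc aX r f ^2 * 1 + 2 * aX r f * aY r f * 0 + aY r f ^2 * 1
          = aX r f ^2 + aY r f ^2 := by ring
        _ = (3 * Phi1 r f - |r ⬝ᵥ f|)/(4 * norm3 r) := by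
            rw [haX, haY2, hs]; field_simp; ring
        _ < -|r ⬝ᵥ f|/(4*norm3 r) + Phi1 r f / norm3 r := by
            rw [div_add_div _ _ (by positivity) (by positivity),
              div_lt_div_iff₀ (by positivity) (by positivity)]
            nlinarith [mul_pos hPpos (mul_pos hn hn), hn.le]
        _ < _ := key
  · -- cross zero case
    push_neg at hx
    unfold c1 Rmat
    rw [if_neg (not_ne_iff.mpr hx), quad]
    have hd0 : 0 ≤ |r ⬝ᵥ f| := abs_nonneg _
    have hq : (0:ℝ) ≤ (|r ⬝ᵥ f| + Phi1 r f)/norm3 r := by positivity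
    calc aX r f ^2 * ((1/norm3 r) • r ⬝ᵥ (1/norm3 r) • r)
          + 2 * aX r f * aY r f * ((1/norm3 r) • r ⬝ᵥ (0:Fin 3 → ℝ))
          + aY r f ^2 * ((0:Fin 3 → ℝ) ⬝ᵥ (0:Fin 3 → ℝ))
        = aX r f ^2 := by rw [h00, dotProduct_zero, zero_dotProduct]; ring
      _ = Real.sign (r ⬝ᵥ f) ^2 / 4 * ((|r ⬝ᵥ f| + Phi1 r f)/norm3 r) := haX
      _ ≤ 1 / 4 * ((|r ⬝ᵥ f| + Phi1 r f)/norm3 r) := by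
          apply mul_le_mul_of_nonneg_right _ hq
          linarith [hs1]
      _ ≤ -|r ⬝ᵥ f|/(4*norm3 r) + Phi1 r f / norm3 r := by
          rw [show (1:ℝ)/4 * ((|r ⬝ᵥ f| + Phi1 r f)/norm3 r)
              = (|r ⬝ᵥ f| + Phi1 r f)/(4*norm3 r) by ring,
            div_add_div _ _ (by positivity) (by positivity),
            div_le_div_iff₀ (by positivity) (by positivity)]
          nlinarith [mul_le_mul_of_nonneg_right
            (by linarith [hPd, hd0] : 2*|r ⬝ᵥ f| ≤ 3*Phi1 r f) (mul_pos hn hn).le, hn.le]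
      _ < _ := key
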